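/- Let F be a graph CNF whose underlying graph is an (n,d,a)-expander with n ≥ 2, degree bound d ≥ 3, and expansion constant a > 0. Then the subfunction width of F satisfies sfw(F) ≥ (min{1,a}/(8d))·n. -/

import Mathlib

abbrev Var := ℕ
abbrev Lit := Var × Bool
abbrev Clause := Finset Lit
abbrev CNF := Finset Clause

def varsClause (c : Clause) : Finset Var := c.image Prod.fst
def varsCNF (F : CNF) : Finset Var := F.sup varsClause
def sizeCNF (F : CNF) : ℕ := ∑ c ∈ F, c.card

def satClauseOn (X : Finset Var) (f : Var → Bool) (c : Clause) : Prop :=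
  ∃ l ∈ c, l.1 ∈ X ∧ f l.1 = l.2

instance (X : Finset Var) (f : Var → Bool) : DecidablePred (satClauseOn X f) := fun c => by
  unfold satClauseOn; infer_instance

def restrict (F : CNF) (X : Finset Var) (f : Var → Bool) : CNF :=
  (F.filter (fun c => ¬ satClauseOn X f c)).image (fun c => c.filter (fun l => l.1 ∉ X))

def st (F : CNF) (X : Finset Var) : Set CNF := { G | ∃ f : Var → Bool, G = restrict F X f }

noncomputable def stw (F : CNF) (σ : List Var) : ℕ :=
  (Finset.Icc 1 σ.length).sup fun i => (st F ((σ.take i).toFinset)).ncard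

def satCNF (F : CNF) (f : Var → Bool) : Prop := ∀ c ∈ F, ∃ l ∈ c, f l.1 = l.2

structure OBDD (σ : List Var) where
  size : ℕ
  label : Fin size → (Fin σ.length) ⊕ Bool
  succ : Fin size → Bool → Fin size
  source : Fin size
  ordered : ∀ v i, label v = Sum.inl i → ∀ b j, label (succ v b) = Sum.inl j → i < j

def OBDD.evalAux {σ : List Var} (D : OBDD σ) (f : Var → Bool) : ℕ → Fin D.size → Bool
  | 0, v => match D.label v with | .inr b => b | .inl _ => false
  | n+1, v => match D.label v with
    | .inr b => b
    | .inl i => D.evalAux f n (D.succ v (f (σ.get i)))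

def OBDD.eval {σ : List Var} (D : OBDD σ) (f : Var → Bool) : Bool :=
  D.evalAux f (σ.length + 1) D.source

def OBDD.computes {σ : List Var} (D : OBDD σ) (F : CNF) : Prop :=
  ∀ f : Var → Bool, D.eval f = true ↔ satCNF F f
/-- F is a graph CNF: its clauses are exactly positive 2-clauses (edges of a graph). -/
def GraphCNF (F : CNF) : Prop :=
  ∀ c ∈ F, ∃ u v : Var, u ≠ v ∧ c = ({(u, true), (v, true)} : Clause)

/-- A set of e clauses of the graph CNF F is subfunction productive relative to the
prefix-variable set P. -/
def SubfunProductive (F : CNF) (P : Finset Var) (e : ℕ) : Prop :=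
  ∃ a u : Fin e → Var,
    Function.Injective a ∧ Function.Injective u ∧
    (∀ i, a i ∈ P) ∧ (∀ i, u i ∈ varsCNF F \ P) ∧
    (∀ i, ({(a i, true), (u i, true)} : Clause) ∈ F) ∧
    (∀ i j, i ≠ j →
      ({(a i, true), (a j, true)} : Clause) ∉ F ∧
      ({(a i, true), (u j, true)} : Clause) ∉ F)

/-- The subfunction width of F. -/
noncomputable def sfw (F : CNF) : ℕ :=
  sInf { m | ∃ σ : List Var, σ.Nodup ∧ σ.toFinset = varsCNF F ∧
    m = (Finset.Icc 1 σ.length).sup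
      (fun i => sSup { e | SubfunProductive F ((σ.take i).toFinset) e }) }
/-- Vertex set of a graph given by its edge set. -/
def verts (Eg : Finset (Finset Var)) : Finset Var := Eg.sup id

/-- Open neighborhood of W in the graph with edge set Eg. -/
def nbhd (Eg : Finset (Finset Var)) (W : Finset Var) : Finset Var :=
  (verts Eg).filter (fun v => v ∉ W ∧ ∃ w ∈ W, ({v, w} : Finset Var) ∈ Eg)

/-- Eg is the edge set of an (n,d,a)-expander: n vertices, all edges of size 2,
maximum degree ≤ d, and |N(W)| ≥ a·|W| for all W with |W| ≤ n/2. -/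
def IsExpander (Eg : Finset (Finset Var)) (n d : ℕ) (a : ℝ) : Prop :=
  (verts Eg).card = n ∧
  (∀ e ∈ Eg, e.card = 2) ∧
  (∀ v ∈ verts Eg, (Eg.filter (fun e => v ∈ e)).card ≤ d) ∧
  (∀ W ⊆ verts Eg, (W.card : ℝ) ≤ (n : ℝ) / 2 → a * W.card ≤ ((nbhd Eg W).card : ℝ))

-- neighborhood of a vertex
def nbr (Eg : Finset (Finset Var)) (v : Var) : Finset Var :=
  (verts Eg).filter (fun w => ({v, w} : Finset Var) ∈ Eg)

lemma mem_verts_of_mem_edge {Eg : Finset (Finset Var)} {e : Finset Var} {v : Var}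
    (he : e ∈ Eg) (hv : v ∈ e) : v ∈ verts Eg :=
  Finset.mem_of_subset (Finset.le_sup (f := id) he) hv

lemma mem_nbr {Eg : Finset (Finset Var)} {v w : Var} :
    w ∈ nbr Eg v ↔ w ∈ verts Eg ∧ ({v, w} : Finset Var) ∈ Eg := by
  simp [nbr]

lemma edge_ne {Eg : Finset (Finset Var)} (h2 : ∀ e ∈ Eg, e.card = 2) {v w : Var}
    (h : ({v, w} : Finset Var) ∈ Eg) : v ≠ w := by
  intro hvw
  subst hvw
  have := h2 _ h
  simp at this

lemma card_nbr_le {Eg : Finset (Finset Var)} {d : ℕ} (h2 : ∀ e ∈ Eg, e.card = 2)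
    (hdeg : ∀ v ∈ verts Eg, (Eg.filter (fun e => v ∈ e)).card ≤ d)
    {v : Var} (hv : v ∈ verts Eg) : (nbr Eg v).card ≤ d := by
  refine le_trans (Finset.card_le_card_of_injOn (fun w => ({v, w} : Finset Var)) ?_ ?_) (hdeg v hv)
  · intro w hw
    rw [Finset.mem_coe, mem_nbr] at hw
    exact Finset.mem_filter.mpr ⟨hw.2, by simp⟩
  · intro w hw w' hw' h
    rw [Finset.mem_coe] at hw hw'
    have hwne : v ≠ w := edge_ne h2 (mem_nbr.mp hw).2
    simp only at h
    have : w ∈ ({v, w'} : Finset Var) := by rw [← h]; simp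
    simp only [Finset.mem_insert, Finset.mem_singleton] at this
    rcases this with h' | h'
    · exact absurd h'.symm hwne
    · exact h'

lemma image_fst_image (e : Finset Var) :
    (e.image (fun v => ((v, true) : Lit))).image Prod.fst = e := by
  rw [Finset.image_image]
  exact Finset.image_id

lemma pair_clause_mem {Eg : Finset (Finset Var)} {F : CNF}
    (hF : F = Eg.image (fun e => e.image (fun v => (v, true)))) (x y : Var) :
    ({(x, true), (y, true)} : Clause) ∈ F ↔ ({x, y} : Finset Var) ∈ Eg := by
  subst hF
  constructor
  · intro h
    obtain ⟨e, he, hee⟩ := Finset.mem_image.mp h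
    have he2 : e = ({x, y} : Finset Var) := by
      have h3 := congrArg (fun c : Clause => c.image Prod.fst) hee
      simpa [image_fst_image, Finset.image_insert, Finset.image_singleton] using h3
    rwa [← he2]
  · intro h
    refine Finset.mem_image.mpr ⟨_, h, ?_⟩
    simp [Finset.image_insert]

lemma varsCNF_graph {Eg : Finset (Finset Var)} {F : CNF}
    (hF : F = Eg.image (fun e => e.image (fun v => (v, true)))) :
    varsCNF F = verts Eg := by
  subst hF
  unfold varsCNF verts
  rw [Finset.sup_image]
  apply Finset.sup_congr rfl
  intro e _
  exact image_fst_image e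

lemma greedy {Eg : Finset (Finset Var)} {d : ℕ} {P Q : Finset Var}
    (h2 : ∀ e ∈ Eg, e.card = 2)
    (hdeg : ∀ v ∈ verts Eg, (Eg.filter (fun e => v ∈ e)).card ≤ d)
    (hPQ : Disjoint P Q) (hPv : P ⊆ verts Eg) (hQv : Q ⊆ verts Eg) :
    ∀ k (M : Finset (Var × Var)), M.card ≤ k →
    (∀ x ∈ M, x.1 ∈ P ∧ x.2 ∈ Q ∧ ({x.1, x.2} : Finset Var) ∈ Eg) →
    (∀ x ∈ M, ∀ y ∈ M, x ≠ y → x.1 ≠ y.1 ∧ x.2 ≠ y.2) →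
    ∃ S ⊆ M, M.card + S.card ≤ 2 * d * S.card ∧
      ∀ x ∈ S, ∀ y ∈ S, x ≠ y →
        ({x.1, y.1} : Finset Var) ∉ Eg ∧ ({x.1, y.2} : Finset Var) ∉ Eg := by
  intro k
  induction k with
  | zero =>
    intro M hMk _ _
    refine ⟨∅, Finset.empty_subset _, ?_, by simp⟩
    simp only [Finset.card_empty]
    omega
  | succ k ih =>
    intro M hMk hM hinj
    rcases Finset.eq_empty_or_nonempty M with rfl | ⟨x, hx⟩
    · refine ⟨∅, Finset.empty_subset _, ?_, by simp⟩
      simp only [Finset.card_empty]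
      omega
    · obtain ⟨hx1P, hx2Q, hxE⟩ := hM x hx
      have hx1v : x.1 ∈ verts Eg := hPv hx1P
      have hx2v : x.2 ∈ verts Eg := hQv hx2Q
      set B1 : Finset (Var × Var) :=
        M.filter (fun y => y.1 ∈ nbr Eg x.1 ∪ nbr Eg x.2) with hB1
      set B2 : Finset (Var × Var) := M.filter (fun y => y.2 ∈ nbr Eg x.1) with hB2
      have hxB1 : x ∈ B1 := by
        refine Finset.mem_filter.mpr ⟨hx, Finset.mem_union_right _ ?_⟩
        rw [mem_nbr]
        exact ⟨hx1v, by rwa [Finset.pair_comm]⟩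
      have hxB2 : x ∈ B2 := by
        refine Finset.mem_filter.mpr ⟨hx, ?_⟩
        rw [mem_nbr]
        exact ⟨hx2v, hxE⟩
      set B : Finset (Var × Var) := B1 ∪ B2 with hBdef
      -- cardinality bounds
      have hB1card : B1.card ≤ (nbr Eg x.1 ∩ P).card + (nbr Eg x.2 ∩ P).card := by
        have : B1.card ≤ ((nbr Eg x.1 ∪ nbr Eg x.2) ∩ P).card := by
          apply Finset.card_le_card_of_injOn (fun y => y.1)
          · intro y hy
            obtain ⟨hyM, hynbr⟩ := Finset.mem_filter.mp hy
            exact Finset.mem_inter.mpr ⟨hynbr, (hM y hyM).1⟩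
          · intro y hy y' hy' hyy
            rw [Finset.mem_coe] at hy hy'
            by_contra hne
            exact (hinj y (Finset.mem_filter.mp hy).1 y' (Finset.mem_filter.mp hy').1 hne).1 hyy
        refine le_trans this (le_trans (Finset.card_le_card (by rw [Finset.union_inter_distrib_right])) ?_)
        exact Finset.card_union_le _ _
      have hB2card : B2.card ≤ (nbr Eg x.1 ∩ Q).card := by
        apply Finset.card_le_card_of_injOn (fun y => y.2)
        · intro y hy
          obtain ⟨hyM, hynbr⟩ := Finset.mem_filter.mp hy
          exact Finset.mem_inter.mpr ⟨hynbr, (hM y hyM).2.1⟩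
        · intro y hy y' hy' hyy
          rw [Finset.mem_coe] at hy hy'
          by_contra hne
          exact (hinj y (Finset.mem_filter.mp hy).1 y' (Finset.mem_filter.mp hy').1 hne).2 hyy
      have hnbr_split : (nbr Eg x.1 ∩ P).card + (nbr Eg x.1 ∩ Q).card ≤ d := by
        have hdisj : Disjoint (nbr Eg x.1 ∩ P) (nbr Eg x.1 ∩ Q) :=
          Disjoint.mono Finset.inter_subset_right Finset.inter_subset_right hPQ
        calc (nbr Eg x.1 ∩ P).card + (nbr Eg x.1 ∩ Q).card
            = ((nbr Eg x.1 ∩ P) ∪ (nbr Eg x.1 ∩ Q)).card := (Finset.card_union_of_disjoint hdisj).symm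
          _ ≤ (nbr Eg x.1).card := Finset.card_le_card (by
              intro z hz
              rcases Finset.mem_union.mp hz with h | h
              · exact (Finset.mem_inter.mp h).1
              · exact (Finset.mem_inter.mp h).1)
          _ ≤ d := card_nbr_le h2 hdeg hx1v
      have hnbr2 : (nbr Eg x.2 ∩ P).card ≤ d :=
        le_trans (Finset.card_le_card Finset.inter_subset_left) (card_nbr_le h2 hdeg hx2v)
      have hBcard : B.card + 1 ≤ 2 * d := by
        have hsub : B ⊆ B1 ∪ B2.erase x := by
          intro y hy
          rcases Finset.mem_union.mp hy with h | h
          · exact Finset.mem_union_left _ h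
          · by_cases hyx : y = x
            · exact Finset.mem_union_left _ (hyx ▸ hxB1)
            · exact Finset.mem_union_right _ (Finset.mem_erase.mpr ⟨hyx, h⟩)
        have h1 : B.card ≤ B1.card + (B2.card - 1) := by
          refine le_trans (Finset.card_le_card hsub) ?_
          refine le_trans (Finset.card_union_le _ _) ?_
          rw [Finset.card_erase_of_mem hxB2]
        have hB2pos : 1 ≤ B2.card := Finset.card_pos.mpr ⟨x, hxB2⟩
        have := add_le_add (add_le_add hB1card hB2card) (le_refl 0)
        omega
      have hBM : B ⊆ M := by
        intro y hy
        rcases Finset.mem_union.mp hy with h | h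
        · exact (Finset.mem_filter.mp h).1
        · exact (Finset.mem_filter.mp h).1
      have hxB : x ∈ B := Finset.mem_union_left _ hxB1
      set M' := M \ B with hM'
      have hM'card : M'.card ≤ k := by
        have h1 : M'.card < M.card := by
          apply Finset.card_lt_card
          constructor
          · exact Finset.sdiff_subset
          · intro hsub
            exact (Finset.mem_sdiff.mp (hsub hx)).2 hxB
        omega
      obtain ⟨S', hS'M', hS'card, hS'cond⟩ := ih M' hM'card
        (fun y hy => hM y (Finset.mem_sdiff.mp hy).1)
        (fun y hy z hz hyz => hinj y (Finset.mem_sdiff.mp hy).1 z (Finset.mem_sdiff.mp hz).1 hyz)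
      have hxS' : x ∉ S' := fun hc => (Finset.mem_sdiff.mp (hS'M' hc)).2 hxB
      refine ⟨insert x S', ?_, ?_, ?_⟩
      · intro y hy
        rcases Finset.mem_insert.mp hy with rfl | h
        · exact hx
        · exact (Finset.mem_sdiff.mp (hS'M' h)).1
      · have hMsplit : M.card = M'.card + B.card := by
          rw [hM']
          rw [Finset.card_sdiff_of_subset hBM]
          have := Finset.card_le_card hBM
          omega
        rw [Finset.card_insert_of_notMem hxS']
        have : 2 * d * (S'.card + 1) = 2 * d * S'.card + 2 * d := by ring
        omega
      · -- pairwise conditions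
        have hkey : ∀ y ∈ S', (y.1 ∉ nbr Eg x.1 ∪ nbr Eg x.2) ∧ y.2 ∉ nbr Eg x.1 := by
          intro y hy
          have hyM' := hS'M' hy
          have hyM := (Finset.mem_sdiff.mp hyM').1
          have hyB := (Finset.mem_sdiff.mp hyM').2
          constructor
          · intro hc
            exact hyB (Finset.mem_union_left _ (Finset.mem_filter.mpr ⟨hyM, hc⟩))
          · intro hc
            exact hyB (Finset.mem_union_right _ (Finset.mem_filter.mpr ⟨hyM, hc⟩))
        intro y hy z hz hyz
        have hMmem : ∀ w ∈ insert x S', w.1 ∈ verts Eg ∧ w.2 ∈ verts Eg := by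
          intro w hw
          rcases Finset.mem_insert.mp hw with rfl | h
          · exact ⟨hx1v, hx2v⟩
          · have := hM w (Finset.mem_sdiff.mp (hS'M' h)).1
            exact ⟨hPv this.1, hQv this.2.1⟩
        rcases Finset.mem_insert.mp hy with rfl | hyS
        · rcases Finset.mem_insert.mp hz with rfl | hzS
          · exact absurd rfl hyz
          · obtain ⟨hz1, hz2⟩ := hkey z hzS
            have hz1n : z.1 ∉ nbr Eg y.1 := fun hc => hz1 (Finset.mem_union_left _ hc)
            constructor
            · intro hc
              exact hz1n (mem_nbr.mpr ⟨(hMmem z (Finset.mem_insert_of_mem hzS)).1, hc⟩)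
            · intro hc
              exact hz2 (mem_nbr.mpr ⟨(hMmem z (Finset.mem_insert_of_mem hzS)).2, hc⟩)
        · rcases Finset.mem_insert.mp hz with rfl | hzS
          · obtain ⟨hy1, _⟩ := hkey y hyS
            have hy1a : y.1 ∉ nbr Eg z.1 := fun hc => hy1 (Finset.mem_union_left _ hc)
            have hy1b : y.1 ∉ nbr Eg z.2 := fun hc => hy1 (Finset.mem_union_right _ hc)
            have hy1v : y.1 ∈ verts Eg := (hMmem y (Finset.mem_insert_of_mem hyS)).1
            constructor
            · intro hc
              rw [Finset.pair_comm] at hc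
              exact hy1a (mem_nbr.mpr ⟨hy1v, hc⟩)
            · intro hc
              rw [Finset.pair_comm] at hc
              exact hy1b (mem_nbr.mpr ⟨hy1v, hc⟩)
          · exact hS'cond y hyS z hzS hyz

lemma matching_exists {Eg : Finset (Finset Var)} (P Q : Finset Var) (D : ℕ)
    (hdefect : ∀ W ⊆ Q, W.card ≤ (W.biUnion (fun w => nbr Eg w ∩ P)).card + D) :
    ∃ M : Finset (Var × Var), Q.card ≤ M.card + D ∧
      (∀ x ∈ M, x.1 ∈ nbr Eg x.2 ∩ P ∧ x.2 ∈ Q) ∧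
      (∀ x ∈ M, ∀ y ∈ M, x ≠ y → x.1 ≠ y.1 ∧ x.2 ≠ y.2) := by
  classical
  set t : {q // q ∈ Q} → Finset (Var ⊕ Fin D) :=
    fun q => ((nbr Eg q.1 ∩ P).image Sum.inl) ∪ ((Finset.univ : Finset (Fin D)).image Sum.inr)
    with ht
  have hhall : ∀ s : Finset {q // q ∈ Q}, s.card ≤ (s.biUnion t).card := by
    intro s
    rcases Finset.eq_empty_or_nonempty s with rfl | ⟨q0, hq0⟩
    · simp
    set W : Finset Var := s.image (fun q => q.1) with hW
    have hWQ : W ⊆ Q := by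
      intro w hw
      obtain ⟨q, _, rfl⟩ := Finset.mem_image.mp hw
      exact q.2
    have hWcard : W.card = s.card :=
      Finset.card_image_of_injective _ Subtype.val_injective
    set X : Finset (Var ⊕ Fin D) :=
      ((W.biUnion (fun w => nbr Eg w ∩ P)).image Sum.inl) ∪
        ((Finset.univ : Finset (Fin D)).image Sum.inr) with hX
    have hXsub : X ⊆ s.biUnion t := by
      intro z hz
      rcases Finset.mem_union.mp hz with h | h
      · obtain ⟨v, hv, rfl⟩ := Finset.mem_image.mp h
        obtain ⟨w, hw, hv2⟩ := Finset.mem_biUnion.mp hv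
        obtain ⟨q, hq, rfl⟩ := Finset.mem_image.mp hw
        exact Finset.mem_biUnion.mpr ⟨q, hq,
          Finset.mem_union_left _ (Finset.mem_image_of_mem _ hv2)⟩
      · exact Finset.mem_biUnion.mpr ⟨q0, hq0, Finset.mem_union_right _ h⟩
    have hXcard : X.card = (W.biUnion (fun w => nbr Eg w ∩ P)).card + D := by
      rw [hX, Finset.card_union_of_disjoint, Finset.card_image_of_injective _ Sum.inl_injective,
        Finset.card_image_of_injective _ Sum.inr_injective]
      · simp
      · rw [Finset.disjoint_left]
        rintro z hz1 hz2
        obtain ⟨v, _, rfl⟩ := Finset.mem_image.mp hz1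
        obtain ⟨r, _, hr⟩ := Finset.mem_image.mp hz2
        exact Sum.inl_ne_inr hr.symm
    calc s.card = W.card := hWcard.symm
      _ ≤ (W.biUnion (fun w => nbr Eg w ∩ P)).card + D := hdefect W hWQ
      _ = X.card := hXcard.symm
      _ ≤ (s.biUnion t).card := Finset.card_le_card hXsub
  obtain ⟨f, hfinj, hf⟩ := (Finset.all_card_le_biUnion_card_iff_exists_injective t).mp hhall
  set L : Finset {q // q ∈ Q} := Q.attach.filter (fun q => (f q).isLeft) with hL
  set R : Finset {q // q ∈ Q} := Q.attach.filter (fun q => ¬ (f q).isLeft) with hR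
  have hLR : L.card + R.card = Q.card := by
    rw [hL, hR, Finset.card_filter_add_card_filter_not, Finset.card_attach]
  have hRD : R.card ≤ D := by
    have : R.card ≤ ((Finset.univ : Finset (Fin D)).image (Option.some)).card := by
      apply Finset.card_le_card_of_injOn (fun q => (f q).getRight?)
      · intro q hq
        have hq2 := (Finset.mem_filter.mp hq).2
        have := hf q
        rw [ht] at this
        rcases Finset.mem_union.mp this with h | h
        · obtain ⟨v, _, hv⟩ := Finset.mem_image.mp h
          rw [← hv] at hq2
          simp at hq2
        · obtain ⟨r, _, hr⟩ := Finset.mem_image.mp h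
          simp only [Finset.mem_coe]
          rw [← hr]
          simp
      · intro q hq q' hq' hqq
        rw [Finset.mem_coe, hR, Finset.mem_filter] at hq hq'
        simp only at hqq
        apply hfinj
        rcases hfq : f q with v | r
        · rw [hfq] at hq; simp at hq
        rcases hfq' : f q' with v' | r'
        · rw [hfq'] at hq'; simp at hq'
        simp only [hfq, hfq', Sum.getRight?, Option.some_inj] at hqq
        rw [hqq]
    rw [Finset.card_image_of_injective _ (Option.some_injective _)] at this
    simpa using this
  set M : Finset (Var × Var) := L.image (fun q => ((f q).getLeft?.getD 0, q.1)) with hM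
  have hgetl : ∀ q ∈ L, f q = Sum.inl ((f q).getLeft?.getD 0) := by
    intro q hq
    have hq2 := (Finset.mem_filter.mp hq).2
    rcases hfq : f q with v | r
    · simp
    · simp [hfq] at hq2
  have hMcard : M.card = L.card := by
    apply Finset.card_image_of_injOn
    intro q hq q' hq' hqq
    have := congrArg Prod.snd hqq
    simp only at this
    exact Subtype.ext this
  have hMmem : ∀ x ∈ M, x.1 ∈ nbr Eg x.2 ∩ P ∧ x.2 ∈ Q := by
    intro x hx
    obtain ⟨q, hq, rfl⟩ := Finset.mem_image.mp hx
    refine ⟨?_, q.2⟩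
    have hfq := hf q
    rw [hgetl q hq, ht] at hfq
    show (f q).getLeft?.getD 0 ∈ nbr Eg q.1 ∩ P
    rcases Finset.mem_union.mp hfq with h | h
    · obtain ⟨v, hv, hveq⟩ := Finset.mem_image.mp h
      rwa [← Sum.inl_injective hveq]
    · obtain ⟨r, _, hr⟩ := Finset.mem_image.mp h
      exact absurd hr (by simp)
  refine ⟨M, ?_, hMmem, ?_⟩
  · omega
  · intro x hx y hy hxy
    obtain ⟨q, hq, rfl⟩ := Finset.mem_image.mp hx
    obtain ⟨q', hq', rfl⟩ := Finset.mem_image.mp hy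
    constructor
    · intro hc
      simp only at hc
      apply hxy
      have : f q = f q' := by
        rw [hgetl q hq, hgetl q' hq', hc]
      rw [hfinj this]
    · intro hc
      simp only at hc
      exact hxy (by rw [Subtype.ext hc])

lemma defect_bound {Eg : Finset (Finset Var)} {n : ℕ} {a α : ℝ} {P Q : Finset Var}
    (hexpand : ∀ W ⊆ verts Eg, (W.card : ℝ) ≤ (n : ℝ) / 2 → a * W.card ≤ ((nbhd Eg W).card : ℝ))
    (hα0 : 0 < α) (hαa : α ≤ a)
    (hQ : Q = verts Eg \ P)
    (hQhalf : (Q.card : ℝ) ≤ (n : ℝ) / 2)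
    (νt : ℕ) (hνt1 : (νt : ℝ) * (1 + α) ≤ α * (Q.card + 1)) (hνtq : νt ≤ Q.card) :
    ∀ W ⊆ Q, W.card ≤ (W.biUnion (fun w => nbr Eg w ∩ P)).card + (Q.card - νt) := by
  intro W hWQ
  by_cases hw : W.card ≤ Q.card - νt
  · omega
  push_neg at hw
  have hWv : W ⊆ verts Eg := hWQ.trans (by rw [hQ]; exact Finset.sdiff_subset)
  have hWQc : W.card ≤ Q.card := Finset.card_le_card hWQ
  have hWhalf : (W.card : ℝ) ≤ (n : ℝ) / 2 := by
    refine le_trans ?_ hQhalf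
    exact_mod_cast hWQc
  have hexp := hexpand W hWv hWhalf
  have hsub : nbhd Eg W ⊆ (W.biUnion (fun w => nbr Eg w ∩ P)) ∪ (Q \ W) := by
    intro v hv
    rw [nbhd, Finset.mem_filter] at hv
    obtain ⟨hvV, hvW, w, hwW, hvw⟩ := hv
    by_cases hvP : v ∈ P
    · refine Finset.mem_union_left _ (Finset.mem_biUnion.mpr ⟨w, hwW, ?_⟩)
      exact Finset.mem_inter.mpr ⟨mem_nbr.mpr ⟨hvV, by rwa [Finset.pair_comm]⟩, hvP⟩
    · refine Finset.mem_union_right _ (Finset.mem_sdiff.mpr ⟨?_, hvW⟩)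
      rw [hQ]
      exact Finset.mem_sdiff.mpr ⟨hvV, hvP⟩
  have hcard1 : (nbhd Eg W).card ≤ (W.biUnion (fun w => nbr Eg w ∩ P)).card + (Q.card - W.card) := by
    refine le_trans (Finset.card_le_card hsub) ?_
    refine le_trans (Finset.card_union_le _ _) ?_
    rw [Finset.card_sdiff_of_subset hWQ]
  -- real arithmetic
  have hreal1 : α * (W.card : ℝ) ≤ ((W.biUnion (fun w => nbr Eg w ∩ P)).card : ℝ)
      + (Q.card : ℝ) - (W.card : ℝ) := by
    have h1 : α * (W.card : ℝ) ≤ a * (W.card : ℝ) := by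
      have := Nat.cast_nonneg (α := ℝ) W.card
      nlinarith
    have h2 : ((nbhd Eg W).card : ℝ) ≤ ((W.biUnion (fun w => nbr Eg w ∩ P)).card : ℝ)
        + ((Q.card : ℝ) - (W.card : ℝ)) := by
      have h3 := (Nat.cast_le (α := ℝ)).mpr hcard1
      push_cast [Nat.cast_sub hWQc] at h3
      linarith
    linarith
  have hge : (Q.card : ℝ) + 1 - (νt : ℝ) ≤ (W.card : ℝ) := by
    have : Q.card + 1 ≤ W.card + νt := by omega
    have := (Nat.cast_le (α := ℝ)).mpr this
    push_cast at this
    linarith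
  have hνtw : (νt : ℝ) ≤ α * (W.card : ℝ) := by
    have h5 := mul_le_mul_of_nonneg_left hge hα0.le
    nlinarith
  have hfinal : (W.card : ℝ) + (νt : ℝ) ≤
      ((W.biUnion (fun w => nbr Eg w ∩ P)).card : ℝ) + (Q.card : ℝ) := by
    linarith
  have hnat : W.card + νt ≤ (W.biUnion (fun w => nbr Eg w ∩ P)).card + Q.card := by
    exact_mod_cast hfinal
  omega

lemma subfun_of_S {Eg : Finset (Finset Var)} {F : CNF}
    (hF : F = Eg.image (fun e => e.image (fun v => (v, true))))
    (P : Finset Var) (S : Finset (Var × Var))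
    (hS1 : ∀ x ∈ S, x.1 ∈ P ∧ x.2 ∈ verts Eg \ P ∧ ({x.1, x.2} : Finset Var) ∈ Eg)
    (hinj : ∀ x ∈ S, ∀ y ∈ S, x ≠ y → x.1 ≠ y.1 ∧ x.2 ≠ y.2)
    (hind : ∀ x ∈ S, ∀ y ∈ S, x ≠ y →
      ({x.1, y.1} : Finset Var) ∉ Eg ∧ ({x.1, y.2} : Finset Var) ∉ Eg) :
    SubfunProductive F P S.card := by
  classical
  set g := S.equivFin.symm with hg
  have hgne : ∀ i j : Fin S.card, i ≠ j → ((g i : Var × Var)) ≠ ((g j : Var × Var)) := by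
    intro i j hij hc
    exact hij (g.injective (Subtype.ext hc))
  refine ⟨fun i => (g i : Var × Var).1, fun i => (g i : Var × Var).2, ?_, ?_, ?_, ?_, ?_, ?_⟩
  · intro i j h
    by_contra hij
    exact (hinj _ (g i).2 _ (g j).2 (hgne i j hij)).1 h
  · intro i j h
    by_contra hij
    exact (hinj _ (g i).2 _ (g j).2 (hgne i j hij)).2 h
  · intro i
    exact (hS1 _ (g i).2).1
  · intro i
    rw [varsCNF_graph hF]
    exact (hS1 _ (g i).2).2.1
  · intro i
    exact (pair_clause_mem hF _ _).mpr (hS1 _ (g i).2).2.2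
  · intro i j hij
    constructor
    · intro hc
      exact (hind _ (g i).2 _ (g j).2 (hgne i j hij)).1 ((pair_clause_mem hF _ _).mp hc)
    · intro hc
      exact (hind _ (g i).2 _ (g j).2 (hgne i j hij)).2 ((pair_clause_mem hF _ _).mp hc)

set_option maxHeartbeats 1000000 in
/-- the graph CNF of an (n,d,a)-expander (n ≥ 2, d ≥ 3, a > 0) has
subfunction width at least (min{1,a}/(8d))·n. -/
theorem expander_sfw_lower_bound (Eg : Finset (Finset Var)) (n d : ℕ) (a : ℝ)
    (hexp : IsExpander Eg n d a) (hn : 2 ≤ n) (hd : 3 ≤ d) (ha : 0 < a)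
    (F : CNF) (hF : F = Eg.image (fun e => e.image (fun v => (v, true)))) :
    (min 1 a / (8 * d)) * n ≤ (sfw F : ℝ) := by
  classical
  obtain ⟨hvc, h2, hdeg, hexpand⟩ := hexp
  have hα0 : 0 < min 1 a := lt_min one_pos ha
  have hα1 : min 1 a ≤ 1 := min_le_left _ _
  have hαa : min 1 a ≤ a := min_le_right _ _
  have hd0 : (0 : ℝ) < (d : ℝ) := by exact_mod_cast (by omega : 0 < d)
  have hd3 : (3 : ℝ) ≤ (d : ℝ) := by exact_mod_cast hd
  have hvars : varsCNF F = verts Eg := varsCNF_graph hF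
  have key : ∀ m ∈ { m : ℕ | ∃ σ : List Var, σ.Nodup ∧ σ.toFinset = varsCNF F ∧
      m = (Finset.Icc 1 σ.length).sup
        (fun i => sSup { e | SubfunProductive F ((σ.take i).toFinset) e }) },
      (min 1 a / (8 * d)) * n ≤ (m : ℝ) := by
    rintro m ⟨σ, hnd, htf, rfl⟩
    have hlen : σ.length = n := by
      rw [← List.toFinset_card_of_nodup hnd, htf, hvars, hvc]
    set i₀ := (n + 1) / 2 with hi₀
    have hi₀1 : 1 ≤ i₀ := by omega
    have hi₀n : i₀ ≤ n := by omega
    set P := (σ.take i₀).toFinset with hP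
    have hPsub : P ⊆ verts Eg := by
      intro x hx
      rw [hP, List.mem_toFinset] at hx
      rw [← hvars, ← htf, List.mem_toFinset]
      exact (List.take_sublist i₀ σ).subset hx
    have hPcard : P.card = i₀ := by
      rw [hP, List.toFinset_card_of_nodup (hnd.sublist (List.take_sublist _ _)),
        List.length_take, hlen]
      omega
    set Q := verts Eg \ P with hQ
    have hQcard : Q.card = n - i₀ := by rw [hQ, Finset.card_sdiff_of_subset hPsub, hvc, hPcard]
    have hQ1 : 1 ≤ Q.card := by omega
    have hQhalf : (Q.card : ℝ) ≤ (n : ℝ) / 2 := by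
      have h1 : 2 * Q.card ≤ n := by omega
      have h2 : (2 : ℝ) * (Q.card : ℝ) ≤ (n : ℝ) := by exact_mod_cast h1
      linarith
    have main : ∃ e : ℕ, SubfunProductive F P e ∧ (min 1 a / (8 * d)) * n ≤ (e : ℝ) := by
      by_cases hcase : min 1 a * n ≤ 8 * d
      · -- small case: a single crossing pair suffices
        have hQv : a * (Q.card : ℝ) ≤ ((nbhd Eg Q).card : ℝ) :=
          hexpand Q (by rw [hQ]; exact Finset.sdiff_subset) hQhalf
        have hpos : (0 : ℝ) < ((nbhd Eg Q).card : ℝ) := by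
          have : (0 : ℝ) < a * (Q.card : ℝ) := by
            have : (1 : ℝ) ≤ (Q.card : ℝ) := by exact_mod_cast hQ1
            nlinarith
          linarith
        have hnbne : ∃ v, v ∈ nbhd Eg Q := by
          have : 0 < (nbhd Eg Q).card := by exact_mod_cast hpos
          obtain ⟨v, hv⟩ := Finset.card_pos.mp this
          exact ⟨v, hv⟩
        obtain ⟨v, hv⟩ := hnbne
        rw [nbhd, Finset.mem_filter] at hv
        obtain ⟨hvV, hvQ, w, hwQ, hvw⟩ := hv
        have hvP : v ∈ P := by
          by_contra hc
          exact hvQ (by rw [hQ]; exact Finset.mem_sdiff.mpr ⟨hvV, hc⟩)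
        refine ⟨1, ⟨fun _ => v, fun _ => w, ?_, ?_, fun _ => hvP, ?_, ?_, ?_⟩, ?_⟩
        · intro i j _; exact Subsingleton.elim i j
        · intro i j _; exact Subsingleton.elim i j
        · intro i
          rw [hvars, ← hQ]
          exact hwQ
        · intro i
          exact (pair_clause_mem hF _ _).mpr hvw
        · intro i j hij
          exact absurd (Subsingleton.elim i j) hij
        · rw [Nat.cast_one, div_mul_eq_mul_div, div_le_one (by positivity)]
          exact hcase
      · -- main case
        push_neg at hcase
        set α := min 1 a with hαdef
        set νt := ⌊α * ((Q.card : ℝ) + 1) / (1 + α)⌋₊ with hνt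
        have h1α : (0 : ℝ) < 1 + α := by linarith
        have harg : (0 : ℝ) ≤ α * ((Q.card : ℝ) + 1) / (1 + α) := by positivity
        have hν1 : (νt : ℝ) * (1 + α) ≤ α * ((Q.card : ℝ) + 1) := by
          have := Nat.floor_le harg
          rw [← le_div_iff₀ h1α]
          exact this
        have hνq : νt ≤ Q.card := by
          have h3 : α * ((Q.card : ℝ) + 1) / (1 + α) ≤ (Q.card : ℝ) := by
            rw [div_le_iff₀ h1α]
            have : (1 : ℝ) ≤ (Q.card : ℝ) := by exact_mod_cast hQ1
            nlinarith
          calc νt ≤ ⌊(Q.card : ℝ)⌋₊ := Nat.floor_mono h3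
            _ = Q.card := Nat.floor_natCast _
        have hdefect := defect_bound hexpand hα0 hαa hQ hQhalf νt hν1 hνq
        obtain ⟨M, hMcard, hMmem, hMinj⟩ := matching_exists P Q (Q.card - νt) hdefect
        have hνM : νt ≤ M.card := by omega
        have hPQ : Disjoint P Q := by
          rw [hQ]
          exact Finset.disjoint_sdiff
        have hMgood : ∀ x ∈ M, x.1 ∈ P ∧ x.2 ∈ Q ∧ ({x.1, x.2} : Finset Var) ∈ Eg := by
          intro x hx
          obtain ⟨h1, h2'⟩ := hMmem x hx
          have h3 := Finset.mem_inter.mp h1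
          refine ⟨h3.2, h2', ?_⟩
          rw [Finset.pair_comm]
          exact (mem_nbr.mp h3.1).2
        obtain ⟨S, hSM, hScard, hScond⟩ := greedy h2 hdeg hPQ hPsub
          (by rw [hQ]; exact Finset.sdiff_subset) M.card M le_rfl hMgood hMinj
        have hSinj : ∀ x ∈ S, ∀ y ∈ S, x ≠ y → x.1 ≠ y.1 ∧ x.2 ≠ y.2 :=
          fun x hx y hy hxy => hMinj x (hSM hx) y (hSM hy) hxy
        refine ⟨S.card, subfun_of_S hF P S ?_ hSinj hScond, ?_⟩
        · intro x hx
          obtain ⟨ha1, ha2, ha3⟩ := hMgood x (hSM hx)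
          exact ⟨ha1, by rw [← hQ]; exact ha2, ha3⟩
        · -- numerics
          have hE0 : (0 : ℝ) ≤ (S.card : ℝ) := Nat.cast_nonneg _
          have hEν : (νt : ℝ) ≤ (S.card : ℝ) * (2 * (d : ℝ) - 1) := by
            have h4 : νt + S.card ≤ 2 * d * S.card := le_trans (by omega) hScard
            have h5 : ((νt : ℝ)) + (S.card : ℝ) ≤ 2 * (d : ℝ) * (S.card : ℝ) := by
              exact_mod_cast h4
            linarith
          have hF1 : α * ((Q.card : ℝ) + 1) < ((νt : ℝ) + 1) * (1 + α) := by
            have h6 := Nat.sub_one_lt_floor (α * ((Q.card : ℝ) + 1) / (1 + α))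
            rw [← hνt] at h6
            have h7 : α * ((Q.card : ℝ) + 1) / (1 + α) < (νt : ℝ) + 1 := by linarith
            exact (div_lt_iff₀ h1α).mp h7
          have hF3 : (n : ℝ) + 1 ≤ 2 * ((Q.card : ℝ) + 1) := by
            have h8 : n + 1 ≤ 2 * (Q.card + 1) := by omega
            exact_mod_cast h8
          -- α(n+1) ≤ 4(νt+1)
          have hνlb : α * ((n : ℝ) + 1) ≤ 4 * ((νt : ℝ) + 1) := by
            have h9 : α * ((Q.card : ℝ) + 1) ≤ 2 * ((νt : ℝ) + 1) := by
              have hν0 : (0 : ℝ) ≤ (νt : ℝ) + 1 := by positivity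
              nlinarith
            have h10 : α * ((n : ℝ) + 1) ≤ 2 * (α * ((Q.card : ℝ) + 1)) := by
              nlinarith [mul_le_mul_of_nonneg_left hF3 hα0.le]
            linarith
          rw [div_mul_eq_mul_div, div_le_iff₀ (by positivity)]
          -- goal : α * n ≤ E * (8 * d)
          have h2d1 : (0 : ℝ) < 2 * (d : ℝ) - 1 := by linarith
          have h11 : 2 * (d : ℝ) * (α * ((n : ℝ) + 1)) ≤ 2 * d * (4 * ((νt : ℝ) + 1)) :=
            mul_le_mul_of_nonneg_left hνlb (by positivity)
          have h12 : 8 * (d : ℝ) * (νt : ℝ) ≤ 8 * d * ((S.card : ℝ) * (2 * d - 1)) :=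
            mul_le_mul_of_nonneg_left hEν (by positivity)
          have h13 : α * (n : ℝ) * (2 * (d : ℝ) - 1) ≤
              (S.card : ℝ) * (8 * (d : ℝ)) * (2 * (d : ℝ) - 1) := by
            have hdα : (0 : ℝ) ≤ 2 * (d : ℝ) * α := by positivity
            nlinarith
          exact le_of_mul_le_mul_right h13 h2d1
    obtain ⟨e, hprod, hbound⟩ := main
    have hbdd : BddAbove { e : ℕ | SubfunProductive F P e } := by
      refine ⟨P.card, ?_⟩
      rintro e' ⟨af, uf, hainj, _, haP, _, _, _⟩
      have h14 : (Finset.univ : Finset (Fin e')).card ≤ P.card := by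
        apply Finset.card_le_card_of_injOn af (fun i _ => haP i)
        intro i _ j _ hij
        exact hainj hij
      simpa using h14
    have h15 : e ≤ sSup { e : ℕ | SubfunProductive F P e } := le_csSup hbdd hprod
    have h16 : sSup { e : ℕ | SubfunProductive F P e } ≤
        (Finset.Icc 1 σ.length).sup
          (fun i => sSup { e | SubfunProductive F ((σ.take i).toFinset) e }) := by
      apply Finset.le_sup (f := fun i => sSup { e | SubfunProductive F ((σ.take i).toFinset) e })
      rw [Finset.mem_Icc, hlen]
      exact ⟨hi₀1, hi₀n⟩
    refine le_trans hbound ?_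
    exact_mod_cast le_trans h15 h16
  have hne : { m : ℕ | ∃ σ : List Var, σ.Nodup ∧ σ.toFinset = varsCNF F ∧
      m = (Finset.Icc 1 σ.length).sup
        (fun i => sSup { e | SubfunProductive F ((σ.take i).toFinset) e }) }.Nonempty :=
    ⟨_, (varsCNF F).toList, Finset.nodup_toList _, Finset.toList_toFinset _, rfl⟩
  exact key _ (Nat.sInf_mem hne)
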